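/- Let θ > 0 and ε ∈ (0, 1). Then there exists a constant C > 0 (depending only on θ and ε) such that for every α ∈ (0, 1) and every u > 0 with u ≥ α and ε ≤ |u − θ| ≤ 1/ε, one has (u − θ)(ψ(u) − ψ(θ)) / ψ′(u) ≥ C α² / 2. -/

import Mathlib

open Real Set Filter

/-- The digamma function `ψ(x) = (d/dx) log Γ(x)`. -/
noncomputable def digamma (x : ℝ) : ℝ := deriv (fun y => Real.log (Real.Gamma y)) x

/-- The trigamma function `ψ′(x) = (d²/dx²) log Γ(x)`. -/
noncomputable def trigamma (x : ℝ) : ℝ := deriv digamma x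

lemma analytic_logGamma : AnalyticOnNhd ℝ (fun y => Real.log (Real.Gamma y)) (Set.Ioi 0) := by
  intro x hx
  have hx0 : (0:ℝ) < x := hx
  have hopen : IsOpen {s : ℂ | 0 < s.re} := isOpen_lt continuous_const Complex.continuous_re
  have hG : AnalyticAt ℂ Complex.Gamma (x:ℂ) := by
    refine DifferentiableOn.analyticAt (fun s hs => ?_) (hopen.mem_nhds (by simpa using hx0))
    refine (Complex.differentiableAt_Gamma s fun m => ?_).differentiableWithinAt
    intro h
    rw [h] at hs
    simp only [Set.mem_setOf_eq, Complex.neg_re, Complex.natCast_re] at hs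
    linarith [Nat.cast_nonneg (α := ℝ) m]
  have hGx : Complex.Gamma (x:ℂ) = (Real.Gamma x : ℂ) := Complex.Gamma_ofReal x
  have hslit : Complex.Gamma (x:ℂ) ∈ Complex.slitPlane := by
    rw [hGx]
    exact Complex.ofReal_mem_slitPlane.2 (Real.Gamma_pos_of_pos hx0)
  have hlog : AnalyticAt ℂ (fun z => Complex.log (Complex.Gamma z)) (x:ℂ) := hG.clog hslit
  have h1 : AnalyticAt ℝ (fun t : ℝ => Complex.log (Complex.Gamma (t:ℂ))) x :=
    (hlog.restrictScalars).comp (Complex.ofRealCLM.analyticAt x)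
  have h2 : AnalyticAt ℝ (fun t : ℝ => (Complex.log (Complex.Gamma (t:ℂ))).re) x :=
    (Complex.reCLM.analyticAt _).comp h1
  refine h2.congr ?_
  filter_upwards [eventually_gt_nhds hx0] with y hy
  rw [Complex.Gamma_ofReal, ← Complex.ofReal_log (Real.Gamma_pos_of_pos hy).le,
    Complex.ofReal_re]

lemma analytic_digamma : AnalyticOnNhd ℝ digamma (Set.Ioi 0) := analytic_logGamma.deriv

lemma analytic_trigamma : AnalyticOnNhd ℝ trigamma (Set.Ioi 0) := analytic_digamma.deriv

lemma digamma_mono : MonotoneOn digamma (Set.Ioi 0) :=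
  Real.convexOn_log_Gamma.monotoneOn_deriv fun x hx => (analytic_logGamma x hx).differentiableAt

lemma hasDerivAt_digamma {x : ℝ} (hx : 0 < x) : HasDerivAt digamma (trigamma x) x :=
  (analytic_digamma x hx).differentiableAt.hasDerivAt

lemma hasDerivAt_logGamma {x : ℝ} (hx : 0 < x) :
    HasDerivAt (fun y => Real.log (Real.Gamma y)) (digamma x) x :=
  (analytic_logGamma x hx).differentiableAt.hasDerivAt

lemma trigamma_nonneg {x : ℝ} (hx : 0 < x) : 0 ≤ trigamma x := by
  have h := (hasDerivAt_digamma hx).hasDerivWithinAt (s := Set.Ioi x)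
  rw [hasDerivWithinAt_iff_tendsto_slope] at h
  have hset : Set.Ioi x \ {x} = Set.Ioi x := Set.diff_singleton_eq_self (by simp)
  rw [hset] at h
  haveI : (nhdsWithin x (Set.Ioi x)).NeBot := nhdsGT_neBot x
  refine ge_of_tendsto h ?_
  filter_upwards [self_mem_nhdsWithin] with y hy'
  replace hy' : x < y := hy'
  rw [slope_def_field]
  have : digamma x ≤ digamma y := digamma_mono hx (hx.trans hy') hy'.le
  have hxy : 0 < y - x := by linarith
  exact div_nonneg (by linarith) hxy.le

lemma digamma_rec {x : ℝ} (hx : 0 < x) : digamma x = digamma (x + 1) - x⁻¹ := by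
  have h1 : HasDerivAt (fun y : ℝ => Real.log (Real.Gamma (y + 1))) (digamma (x + 1)) x := by
    simpa using (hasDerivAt_logGamma (by linarith : (0:ℝ) < x + 1)).comp_add_const x 1
  have h2 : HasDerivAt Real.log x⁻¹ x := Real.hasDerivAt_log hx.ne'
  have key : (fun y : ℝ => Real.log (Real.Gamma (y + 1)) - Real.log y) =ᶠ[nhds x]
      (fun y => Real.log (Real.Gamma y)) := by
    filter_upwards [eventually_gt_nhds hx] with y hy
    rw [Real.Gamma_add_one hy.ne', Real.log_mul hy.ne' (Real.Gamma_pos_of_pos hy).ne']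
    ring
  have h3 : HasDerivAt (fun y => Real.log (Real.Gamma y)) (digamma (x + 1) - x⁻¹) x :=
    (h1.sub h2).congr_of_eventuallyEq key.symm
  exact h3.deriv.symm ▸ rfl

lemma trigamma_rec {x : ℝ} (hx : 0 < x) : trigamma x = trigamma (x + 1) + (x ^ 2)⁻¹ := by
  have h1 : HasDerivAt (fun y : ℝ => digamma (y + 1)) (trigamma (x + 1)) x := by
    simpa using (hasDerivAt_digamma (by linarith : (0:ℝ) < x + 1)).comp_add_const x 1
  have h2 : HasDerivAt (fun y : ℝ => y⁻¹) (-(x ^ 2)⁻¹) x := hasDerivAt_inv hx.ne'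
  have key : (fun y : ℝ => digamma (y + 1) - y⁻¹) =ᶠ[nhds x] digamma := by
    filter_upwards [eventually_gt_nhds hx] with y hy
    rw [digamma_rec hy]
  have h3 : HasDerivAt digamma (trigamma (x + 1) - -(x ^ 2)⁻¹) x :=
    (h1.sub h2).congr_of_eventuallyEq key.symm
  have := h3.deriv
  rw [show trigamma (x+1) - -(x^2)⁻¹ = trigamma (x+1) + (x^2)⁻¹ by ring] at this
  exact this.symm ▸ rfl

lemma trigamma_pos {x : ℝ} (hx : 0 < x) : 0 < trigamma x := by
  rw [trigamma_rec hx]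
  have h1 := trigamma_nonneg (by linarith : (0:ℝ) < x + 1)
  have h2 : 0 < (x ^ 2)⁻¹ := by positivity
  linarith

lemma digamma_strictMono : StrictMonoOn digamma (Set.Ioi 0) := by
  refine strictMonoOn_of_deriv_pos (convex_Ioi 0) ?_ ?_
  · exact fun x hx => (analytic_digamma x hx).continuousAt.continuousWithinAt
  · intro x hx
    rw [interior_Ioi] at hx
    exact trigamma_pos hx

lemma num_pos {θ u : ℝ} (hθ : 0 < θ) (hu : 0 < u) (hne : u ≠ θ) :
    0 < (u - θ) * (digamma u - digamma θ) := by
  rcases lt_or_gt_of_ne hne with h | h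
  · have := digamma_strictMono (Set.mem_Ioi.2 hu) (Set.mem_Ioi.2 hθ) h
    nlinarith
  · have := digamma_strictMono (Set.mem_Ioi.2 hθ) (Set.mem_Ioi.2 hu) h
    nlinarith

set_option maxHeartbeats 1000000 in
/-- Let `θ > 0` and `ε ∈ (0, 1)`. Then there exists a constant `C > 0` (depending only on `θ`
and `ε`) such that for every `α ∈ (0, 1)` and every `u > 0` with `u ≥ α` and
`ε ≤ |u − θ| ≤ 1/ε`, one has `(u − θ)(ψ(u) − ψ(θ)) / ψ′(u) ≥ C α² / 2`. -/
theorem stmt_15 (θ : ℝ) (hθ : 0 < θ) (ε : ℝ) (hε : ε ∈ Set.Ioo (0 : ℝ) 1) :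
    ∃ C > (0 : ℝ), ∀ α ∈ Set.Ioo (0 : ℝ) 1, ∀ u : ℝ, 0 < u → α ≤ u →
      ε ≤ |u - θ| → |u - θ| ≤ 1 / ε →
      C * α ^ 2 / 2 ≤ (u - θ) * (digamma u - digamma θ) / trigamma u := by
  obtain ⟨hε0, hε1⟩ := hε
  -- max of trigamma on [1,2]
  obtain ⟨z, hz, hzmax⟩ : ∃ z ∈ Set.Icc (1:ℝ) 2, ∀ w ∈ Set.Icc (1:ℝ) 2,
      trigamma w ≤ trigamma z := by
    have hcont12 : ContinuousOn trigamma (Set.Icc (1:ℝ) 2) := fun w hw =>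
      (analytic_trigamma w (by simp only [Set.mem_Ioi]; linarith [hw.1])).continuousAt.continuousWithinAt
    obtain ⟨z, hz, hzm⟩ := isCompact_Icc.exists_isMaxOn (f := trigamma) ⟨1, by norm_num⟩ hcont12
    exact ⟨z, hz, fun w hw => hzm hw⟩
  obtain ⟨M, hM⟩ : ∃ M : ℝ, M = trigamma z := ⟨_, rfl⟩
  replace hzmax : ∀ w ∈ Set.Icc (1:ℝ) 2, trigamma w ≤ M := by rw [hM]; exact hzmax
  have hM0 : 0 < M := by rw [hM]; exact trigamma_pos (by linarith [hz.1])
  obtain ⟨b, hb⟩ : ∃ b : ℝ, b = digamma 2 - digamma θ := ⟨_, rfl⟩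
  set δ : ℝ := min (min (θ/2) 1) (1/(2 * max b 1)) with hδ
  have hmax1 : (1:ℝ) ≤ max b 1 := le_max_right _ _
  have hδ0 : 0 < δ := by
    refine lt_min (lt_min (by linarith) one_pos) ?_
    positivity
  have hδθ : δ ≤ θ/2 := le_trans (min_le_left _ _) (min_le_left _ _)
  have hδ1 : δ ≤ 1 := le_trans (min_le_left _ _) (min_le_right _ _)
  have hδb : δ ≤ 1/(2 * max b 1) := min_le_right _ _
  -- compact set
  set K : Set ℝ := Set.Icc δ (θ + 1/ε) ∩ {w | ε ≤ |w - θ|} with hK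
  have hKsub : K ⊆ Set.Ioi 0 := fun w hw => by
    simp only [Set.mem_Ioi]; linarith [hw.1.1]
  have hKc : IsCompact K :=
    isCompact_Icc.inter_right (isClosed_le continuous_const
      ((continuous_id.sub continuous_const).abs))
  have hKne : θ + ε ∈ K := by
    constructor
    · constructor
      · linarith
      · have : ε ≤ 1/ε := by
          rw [le_div_iff₀ hε0]; nlinarith
        linarith
    · simp only [Set.mem_setOf_eq, add_sub_cancel_left, abs_of_pos hε0, le_refl]
  have hgcont : ContinuousOn (fun u => (u - θ) * (digamma u - digamma θ) / trigamma u) K := by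
    refine ContinuousOn.div ?_ ?_ ?_
    · have hd : ContinuousOn digamma K :=
        fun w hw => (analytic_digamma w (hKsub hw)).continuousAt.continuousWithinAt
      exact (continuousOn_id.sub continuousOn_const).mul (hd.sub continuousOn_const)
    · exact fun w hw => (analytic_trigamma w (hKsub hw)).continuousAt.continuousWithinAt
    · exact fun w hw => (trigamma_pos (hKsub hw)).ne'
  obtain ⟨w, hwK, hwmin'⟩ := hKc.exists_isMinOn ⟨θ + ε, hKne⟩ hgcont
  have hwmin : ∀ v ∈ K, (w - θ) * (digamma w - digamma θ) / trigamma w ≤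
      (v - θ) * (digamma v - digamma θ) / trigamma v := fun v hv => hwmin' hv
  obtain ⟨C₁, hC₁def⟩ : ∃ c : ℝ, c = (w - θ) * (digamma w - digamma θ) / trigamma w := ⟨_, rfl⟩
  rw [← hC₁def] at hwmin
  have hw0 : 0 < w := hKsub hwK
  have hwne : w ≠ θ := by
    intro h
    have := hwK.2
    simp only [Set.mem_setOf_eq, h, sub_self, abs_zero] at this
    linarith
  have hC₁ : 0 < C₁ := hC₁def ▸ div_pos (num_pos hθ hw0 hwne) (trigamma_pos hw0)
  refine ⟨min (2*C₁) (θ/(2*(M+1))), lt_min (by linarith) (div_pos hθ (by linarith)), ?_⟩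
  intro α hα u hu hαu h1 h2
  obtain ⟨hα0, hα1⟩ := hα
  obtain ⟨C, hCdef⟩ : ∃ c : ℝ, c = min (2*C₁) (θ/(2*(M+1))) := ⟨_, rfl⟩
  rw [← hCdef]
  have hC0 : 0 < C := by rw [hCdef]; exact lt_min (by linarith) (div_pos hθ (by linarith))
  by_cases hcase : δ ≤ u
  · -- compact region
    have huK : u ∈ K := by
      refine ⟨⟨hcase, ?_⟩, h1⟩
      have : u - θ ≤ |u - θ| := le_abs_self _
      linarith
    have hgu := hwmin u huK
    have hα2 : α^2 ≤ 1 := by nlinarith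
    have : C * α^2/2 ≤ C₁ := by
      have hC2 : C ≤ 2*C₁ := hCdef ▸ min_le_left _ _
      nlinarith
    linarith
  · push_neg at hcase
    have hu1 : u ≤ 1 := by linarith
    have hT : trigamma u ≤ (M+1) * (u^2)⁻¹ := by
      rw [trigamma_rec hu]
      have ht1 : trigamma (u+1) ≤ M := hzmax (u+1) ⟨by linarith, by linarith⟩
      have ht2 : (1:ℝ) ≤ (u^2)⁻¹ := by
        rw [le_inv_comm₀ one_pos (by positivity)]
        nlinarith
      nlinarith
    have hψu : digamma u ≤ digamma 2 - u⁻¹ := by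
      rw [digamma_rec hu]
      have := digamma_mono (Set.mem_Ioi.2 (by linarith : (0:ℝ) < u + 1))
        (Set.mem_Ioi.2 (by norm_num : (0:ℝ) < 2)) (by linarith)
      linarith
    -- 1/u ≥ 2 * max b 1
    have hinv : 2 * max b 1 ≤ u⁻¹ := by
      rw [le_inv_comm₀ (by positivity) hu]
      calc u ≤ δ := hcase.le
        _ ≤ 1/(2 * max b 1) := hδb
        _ = (2 * max b 1)⁻¹ := one_div _
    have hbb : b ≤ u⁻¹ / 2 := by
      have : b ≤ max b 1 := le_max_left _ _
      linarith
    have hnum : θ * u⁻¹ / 4 ≤ (u - θ) * (digamma u - digamma θ) := by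
      have hd : u⁻¹/2 ≤ digamma θ - digamma u := by
        have hbe := hb
        linarith
      have hθu : θ/2 ≤ θ - u := by linarith
      have h5 : (θ/2)*(u⁻¹/2) ≤ (θ-u)*(digamma θ - digamma u) :=
        mul_le_mul hθu hd (by positivity) (by linarith)
      have h6 : (u-θ)*(digamma u - digamma θ) = (θ-u)*(digamma θ - digamma u) := by ring
      have h7 : θ * u⁻¹ / 4 = (θ/2)*(u⁻¹/2) := by ring
      linarith [h5, h6, h7]
    have hTpos : 0 < trigamma u := trigamma_pos hu
    rw [div_le_div_iff₀ (by norm_num) hTpos]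
    have hC2 : C ≤ θ/(2*(M+1)) := hCdef ▸ min_le_right _ _
    calc C * α^2 * trigamma u
        ≤ C * α^2 * ((M+1)*(u^2)⁻¹) :=
          mul_le_mul_of_nonneg_left hT (mul_nonneg hC0.le (sq_nonneg α))
      _ ≤ (θ/(2*(M+1))) * α^2 * ((M+1)*(u^2)⁻¹) := by
          have hh : C * α^2 ≤ (θ/(2*(M+1))) * α^2 :=
            mul_le_mul_of_nonneg_right hC2 (sq_nonneg α)
          exact mul_le_mul_of_nonneg_right hh
            (mul_nonneg (by linarith) (by positivity))
      _ = θ * α^2 * (u^2)⁻¹ / 2 := by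
          have hM1 : M + 1 ≠ 0 := by linarith
          field_simp
      _ ≤ θ * u * (u^2)⁻¹ / 2 := by
          have hau : α^2 ≤ u := by
            have h9 : α*α ≤ α*1 := mul_le_mul_of_nonneg_left hα1.le hα0.le
            calc α^2 = α*α := sq α
              _ ≤ α*1 := h9
              _ = α := mul_one α
              _ ≤ u := hαu
          have h4 : (0:ℝ) < (u^2)⁻¹ := by positivity
          have h5 := mul_le_mul_of_nonneg_left
            (mul_le_mul_of_nonneg_right hau h4.le) (le_of_lt hθ)
          linarith [h5]
      _ = θ * u⁻¹ / 2 := by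
          rw [sq]
          field_simp
      _ ≤ (u - θ) * (digamma u - digamma θ) * 2 := by linarith [hnum]
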